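/- With the hypotheses of the bi-Lipschitz perturbation result (X proper Gromov-hyperbolic, φ : H → Isom(X) injective onto a quasi-convex cocompact subgroup, p ∈ X), there exists ε₀ > 0 such that every ε-perturbation φ_ε of φ with 0 ≤ ε ≤ ε₀ is injective. -/

import Mathlib

open Set

/-- `s` is (the image of) a geodesic segment from `x` to `y`. -/
def IsGeodesicSegment {X : Type} [MetricSpace X] (x y : X) (s : Set X) : Prop :=
  ∃ γ : ℝ → X, γ 0 = x ∧ γ (dist x y) = y ∧
    (∀ t ∈ Icc (0:ℝ) (dist x y), ∀ t' ∈ Icc (0:ℝ) (dist x y),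
      dist (γ t) (γ t') = |t - t'|) ∧
    s = γ '' Icc 0 (dist x y)

/-- A geodesic metric space: any two points are joined by a geodesic segment. -/
def GeodesicSpace (X : Type) [MetricSpace X] : Prop :=
  ∀ x y : X, ∃ s, IsGeodesicSegment x y s

/-- `δ`-hyperbolicity (thin triangles): a geodesic space in which each side of every
geodesic triangle lies in the `δ`-neighborhood of the union of the other two sides. -/
def DeltaHyperbolic (X : Type) [MetricSpace X] (δ : ℝ) : Prop :=
  GeodesicSpace X ∧
  ∀ (x y z : X) (s₁ s₂ s₃ : Set X),
    IsGeodesicSegment x y s₁ → IsGeodesicSegment y z s₂ → IsGeodesicSegment z x s₃ →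
    ∀ p ∈ s₁, ∃ q ∈ s₂ ∪ s₃, dist p q ≤ δ

/-- `q` is a `(λ,c)`-quasi-geodesic on the set `I ⊆ ℝ`. -/
def QuasiGeodesicOn {X : Type} [MetricSpace X] (q : ℝ → X) (I : Set ℝ) (lam c : ℝ) : Prop :=
  ∀ t ∈ I, ∀ t' ∈ I,
    lam⁻¹ * |t - t'| - c ≤ dist (q t) (q t') ∧ dist (q t) (q t') ≤ lam * |t - t'| + c

/-- `q` is an `(M,λ,c)`-local-quasi-geodesic on `I`: its restriction to every
subinterval of length at most `M` is a `(λ,c)`-quasi-geodesic. -/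
def LocalQuasiGeodesicOn {X : Type} [MetricSpace X] (q : ℝ → X) (I : Set ℝ)
    (M lam c : ℝ) : Prop :=
  ∀ a b : ℝ, a ∈ I → b ∈ I → a ≤ b → b - a ≤ M →
    QuasiGeodesicOn q (I ∩ Icc a b) lam c

/-- A subset `A` of a metric space is quasi-convex. -/
def QuasiConvexSet {X : Type} [MetricSpace X] (A : Set X) : Prop :=
  ∃ ε : ℝ, 0 ≤ ε ∧ ∀ x ∈ A, ∀ y ∈ A, ∀ s : Set X, IsGeodesicSegment x y s →
    ∀ p ∈ s, ∃ q ∈ A, dist p q ≤ ε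

namespace PertAux

variable {X : Type} [MetricSpace X]

/-- The Gromov product. -/
noncomputable def gp (w x y : X) : ℝ := (dist w x + dist w y - dist x y) / 2

lemma gp_comm (w x y : X) : gp w x y = gp w y x := by
  simp only [gp, dist_comm x y]; ring

lemma mem_left_of_geo {x y : X} {s : Set X} (h : IsGeodesicSegment x y s) : x ∈ s := by
  obtain ⟨γ, h0, _, _, hs⟩ := h
  rw [hs]; exact ⟨0, ⟨le_refl _, dist_nonneg⟩, h0⟩

lemma mem_right_of_geo {x y : X} {s : Set X} (h : IsGeodesicSegment x y s) : y ∈ s := by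
  obtain ⟨γ, _, hd, _, hs⟩ := h
  rw [hs]; exact ⟨dist x y, ⟨dist_nonneg, le_refl _⟩, hd⟩

/-- For a point z on a geodesic from x to y, `dist x z + dist z y = dist x y`. -/
lemma geo_dist_add {x y : X} {s : Set X} (h : IsGeodesicSegment x y s) {z : X} (hz : z ∈ s) :
    dist x z + dist z y = dist x y := by
  obtain ⟨γ, h0, hd, hiso, hs⟩ := h
  rw [hs] at hz
  obtain ⟨t, ht, rfl⟩ := hz
  have h0m : (0:ℝ) ∈ Icc (0:ℝ) (dist x y) := ⟨le_refl _, dist_nonneg⟩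
  have hdm : dist x y ∈ Icc (0:ℝ) (dist x y) := ⟨dist_nonneg, le_refl _⟩
  have e1 : dist x (γ t) = t := by
    have := hiso 0 h0m t ht
    rw [h0] at this
    rw [this, abs_of_nonpos (by linarith [ht.1])]; ring
  have e2 : dist (γ t) y = dist x y - t := by
    have := hiso t ht _ hdm
    rw [hd] at this
    rw [this, abs_of_nonpos (by linarith [ht.2])]; ring
  rw [e1, e2]; ring

/-- Lemma A: every point of a geodesic from x to y is at distance at least `(x|y)_w` from w. -/
lemma gp_le_dist_of_mem_geo {x y : X} {s : Set X} (h : IsGeodesicSegment x y s) (w : X)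
    {z : X} (hz : z ∈ s) : gp w x y ≤ dist w z := by
  have h1 := geo_dist_add h hz
  have h2 := dist_triangle w z x
  have h3 := dist_triangle w z y
  simp only [gp]
  rw [dist_comm z x] at h2
  linarith

lemma geo_compact {x y : X} {s : Set X} (h : IsGeodesicSegment x y s) :
    IsCompact s ∧ s.Nonempty := by
  obtain ⟨γ, h0, hd, hiso, hs⟩ := h
  have hcont : ContinuousOn γ (Icc 0 (dist x y)) := by
    have : LipschitzOnWith 1 γ (Icc 0 (dist x y)) := by
      rw [lipschitzOnWith_iff_dist_le_mul]
      intro a ha b hb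
      rw [hiso a ha b hb]
      simp [Real.dist_eq]
    exact this.continuousOn
  refine ⟨hs ▸ isCompact_Icc.image_of_continuousOn hcont, ?_⟩
  exact ⟨x, mem_left_of_geo ⟨γ, h0, hd, hiso, hs⟩⟩

/-- Lemma B: on a geodesic from `x` to `y` there is a point within `(x|y)_w + 2δ` of `w`. -/
lemma exists_gp_near {δ : ℝ} (hδ : 0 ≤ δ) (hX : DeltaHyperbolic X δ)
    {x y : X} {s : Set X} (hs : IsGeodesicSegment x y s) (w : X) :
    ∃ z ∈ s, dist w z ≤ gp w x y + 2 * δ := by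
  obtain ⟨s₂, hs₂⟩ := hX.1 y w
  obtain ⟨s₃, hs₃⟩ := hX.1 w x
  have thin := hX.2 x y w s s₂ s₃ hs hs₂ hs₃
  obtain ⟨γ, h0, hd, hiso, hseq⟩ := hs
  set d := dist x y with hdd
  have hd0 : 0 ≤ d := dist_nonneg
  set pr : ℝ → ℝ := fun t => max 0 (min d t) with hpr
  have hprIcc : ∀ t, pr t ∈ Icc 0 d := by
    intro t; constructor
    · exact le_max_left _ _
    · simp only [hpr, max_le_iff]
      exact ⟨hd0, min_le_left _ _⟩
  have hpr_id : ∀ t ∈ Icc (0:ℝ) d, pr t = t := by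
    intro t ht
    simp only [hpr, min_eq_right ht.2, max_eq_right ht.1]
  have hcontγ : ContinuousOn γ (Icc 0 d) := by
    have : LipschitzOnWith 1 γ (Icc 0 d) := by
      rw [lipschitzOnWith_iff_dist_le_mul]
      intro a ha b hb
      rw [hiso a ha b hb]; simp [Real.dist_eq]
    exact this.continuousOn
  have hcontpr : Continuous pr :=
    continuous_const.max (continuous_const.min continuous_id)
  set g : ℝ → X := fun t => γ (pr t) with hg
  have hcontg : Continuous g := hcontγ.comp_continuous hcontpr (fun t => hprIcc t)
  have h2c := geo_compact hs₂
  have h3c := geo_compact hs₃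
  set C2 : Set ℝ := {t | Metric.infDist (g t) s₂ ≤ δ} with hC2
  set C3 : Set ℝ := {t | Metric.infDist (g t) s₃ ≤ δ} with hC3
  have hC2closed : IsClosed C2 :=
    isClosed_le (Metric.continuous_infDist_pt s₂ |>.comp hcontg) continuous_const
  have hC3closed : IsClosed C3 :=
    isClosed_le (Metric.continuous_infDist_pt s₃ |>.comp hcontg) continuous_const
  have hcover : Icc 0 d ⊆ C2 ∪ C3 := by
    intro t ht
    have hmem : γ t ∈ s := by rw [hseq]; exact ⟨t, ht, rfl⟩
    obtain ⟨q, hq, hqd⟩ := thin (γ t) hmem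
    have hgt : g t = γ t := by show γ (pr t) = γ t; rw [hpr_id t ht]
    rcases hq with hq | hq
    · left; rw [hC2]; simp only [mem_setOf_eq, hgt]
      exact le_trans (Metric.infDist_le_dist_of_mem hq) hqd
    · right; simp only [hC3, mem_setOf_eq, hgt]
      exact le_trans (Metric.infDist_le_dist_of_mem hq) hqd
  have hne2 : (Icc (0:ℝ) d ∩ C2).Nonempty := by
    refine ⟨d, ⟨dist_nonneg, le_refl _⟩, ?_⟩
    have : g d = y := by show γ (pr d) = y; rw [hpr_id d ⟨hd0, le_refl _⟩, hd]
    simp only [hC2, mem_setOf_eq, this]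
    exact le_trans (Metric.infDist_le_dist_of_mem (mem_left_of_geo hs₂)) (by simp [hδ])
  have hne3 : (Icc (0:ℝ) d ∩ C3).Nonempty := by
    refine ⟨0, ⟨le_refl _, hd0⟩, ?_⟩
    have : g 0 = x := by show γ (pr 0) = x; rw [hpr_id 0 ⟨le_refl _, hd0⟩, h0]
    simp only [hC3, mem_setOf_eq, this]
    exact le_trans (Metric.infDist_le_dist_of_mem (mem_right_of_geo hs₃)) (by simp [hδ])
  obtain ⟨t, htIcc, ht2, ht3⟩ :=
    isPreconnected_closed_iff.mp isPreconnected_Icc C2 C3 hC2closed hC3closed hcover hne2 hne3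
  set z := γ t with hz
  have hzs : z ∈ s := by rw [hseq]; exact ⟨t, htIcc, rfl⟩
  have hgt : g t = z := by show γ (pr t) = z; rw [hpr_id t htIcc]
  refine ⟨z, hzs, ?_⟩
  obtain ⟨q2, hq2, hq2d⟩ := h2c.1.exists_infDist_eq_dist h2c.2 z
  obtain ⟨q3, hq3, hq3d⟩ := h3c.1.exists_infDist_eq_dist h3c.2 z
  have hzq2 : dist z q2 ≤ δ := by rw [← hq2d]; rw [hC2] at ht2; simpa [hgt] using ht2
  have hzq3 : dist z q3 ≤ δ := by rw [← hq3d]; rw [hC3] at ht3; simpa [hgt] using ht3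
  have e2 : dist y q2 + dist q2 w = dist y w := geo_dist_add hs₂ hq2
  have e3 : dist w q3 + dist q3 x = dist w x := geo_dist_add hs₃ hq3
  have eyz : dist y z ≤ dist y q2 + δ := by
    have := dist_triangle y q2 z
    have h' : dist q2 z = dist z q2 := dist_comm _ _
    linarith [hzq2, this, h'.le]
  have exz : dist x z ≤ dist x q3 + δ := by
    have := dist_triangle x q3 z
    have h' : dist q3 z = dist z q3 := dist_comm _ _
    linarith [hzq3, this, h'.le]
  have hw2 : dist w z ≤ dist w q2 + δ := by
    have := dist_triangle w q2 z
    linarith [hzq2, (dist_comm q2 z).le]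
  have hw3 : dist w z ≤ dist w q3 + δ := by
    have := dist_triangle w q3 z
    linarith [hzq3, (dist_comm q3 z).le]
  have hxzy : dist x z + dist z y = d := geo_dist_add ⟨γ, h0, hd, hiso, hseq⟩ hzs
  have k2 : dist w z ≤ dist w y - dist y z + 2*δ := by
    have : dist w q2 = dist y w - dist y q2 := by linarith [e2, (dist_comm q2 w)]
    rw [dist_comm w y]
    have hh := hw2
    rw [this] at hh
    linarith [eyz]
  have k3 : dist w z ≤ dist w x - dist x z + 2*δ := by
    have h3' : dist w q3 = dist w x - dist x q3 := by linarith [e3, (dist_comm q3 x)]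
    have hh := hw3
    rw [h3'] at hh
    linarith [exz]
  have : 2 * dist w z ≤ dist w x + dist w y - d + 4*δ := by
    have hc : dist z y = dist y z := dist_comm z y
    linarith [k2, k3, hxzy]
  simp only [gp]
  linarith

/-- Four-point inequality with constant `3δ`. -/
lemma four_point {δ : ℝ} (hδ : 0 ≤ δ) (hX : DeltaHyperbolic X δ) (w x y z : X) :
    min (gp w x y) (gp w y z) - 3 * δ ≤ gp w x z := by
  obtain ⟨s₁, hs₁⟩ := hX.1 x z
  obtain ⟨m, hm, hmd⟩ := exists_gp_near hδ hX hs₁ w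
  obtain ⟨s₂, hs₂⟩ := hX.1 z y
  obtain ⟨s₃, hs₃⟩ := hX.1 y x
  obtain ⟨q, hq, hqd⟩ := hX.2 x z y s₁ s₂ s₃ hs₁ hs₂ hs₃ m hm
  have hwm : dist w q - δ ≤ dist w m := by
    have := dist_triangle w m q
    linarith
  rcases hq with hq | hq
  · have := gp_le_dist_of_mem_geo hs₂ w hq
    have hsym : gp w z y = gp w y z := gp_comm w z y
    calc min (gp w x y) (gp w y z) - 3*δ ≤ gp w y z - 3*δ := by
          linarith [min_le_right (gp w x y) (gp w y z)]
      _ ≤ dist w m - 2*δ := by rw [← hsym]; linarith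
      _ ≤ gp w x z := by linarith
  · have := gp_le_dist_of_mem_geo hs₃ w hq
    have hsym : gp w y x = gp w x y := gp_comm w y x
    calc min (gp w x y) (gp w y z) - 3*δ ≤ gp w x y - 3*δ := by
          linarith [min_le_left (gp w x y) (gp w y z)]
      _ ≤ dist w m - 2*δ := by rw [← hsym]; linarith
      _ ≤ gp w x z := by linarith

/-- Chain lemma: a chain of points with long jumps and small Gromov products at the
joints makes linear progress. -/
lemma chain_lemma (δ' K R : ℝ) (hδ' : 0 ≤ δ') (hK : 0 ≤ K)
    (hfp : ∀ w x y z : X, min (gp w x y) (gp w y z) - δ' ≤ gp w x z)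
    (x : ℕ → X) (m : ℕ) (hm : 1 ≤ m)
    (hR : ∀ i, i + 1 ≤ m → R ≤ dist (x i) (x (i+1)))
    (hKj : ∀ i, i + 2 ≤ m → gp (x (i+1)) (x i) (x (i+2)) ≤ K)
    (hRK : 2*K + 2*δ' + 2 ≤ R) :
    2 * m ≤ dist (x 0) (x m) := by
  have key : ∀ i, 1 ≤ i → i + 1 ≤ m → gp (x i) (x 0) (x (i+1)) ≤ K + δ' := by
    intro i h1
    induction i, h1 using Nat.le_induction with
    | base => intro h2; have := hKj 0 (by omega); simp at this ⊢; linarith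
    | succ i hi IH =>
      intro hle
      have IH' : gp (x i) (x 0) (x (i+1)) ≤ K + δ' := IH (by omega)
      have hid : gp (x (i+1)) (x i) (x 0)
          = dist (x i) (x (i+1)) - gp (x i) (x 0) (x (i+1)) := by
        simp only [gp]
        rw [dist_comm (x (i+1)) (x i), dist_comm (x (i+1)) (x 0), dist_comm (x i) (x 0)]
        ring
      have hbig : R - (K + δ') ≤ gp (x (i+1)) (x i) (x 0) := by
        rw [hid]
        have := hR i (by omega)
        linarith
      have h4 := hfp (x (i+1)) (x i) (x 0) (x (i+2))
      have hj := hKj i (by omega)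
      have hmin : min (gp (x (i+1)) (x i) (x 0)) (gp (x (i+1)) (x 0) (x (i+2))) ≤ K + δ' := by
        linarith [h4]
      rcases min_le_iff.mp hmin with h | h
      · exfalso; linarith
      · exact h
  have acc : ∀ i, i ≤ m → 2 * i ≤ dist (x 0) (x i) := by
    intro i
    induction i with
    | zero => intro _; simp
    | succ i IH =>
      intro hle
      rcases Nat.eq_zero_or_pos i with rfl | hipos
      · have := hR 0 (by omega)
        push_cast
        linarith
      · have IH' := IH (by omega)
        have hkey := key i hipos hle
        have hid : dist (x 0) (x (i+1))
            = dist (x 0) (x i) + dist (x i) (x (i+1)) - 2 * gp (x i) (x 0) (x (i+1)) := by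
          simp only [gp]
          rw [dist_comm (x i) (x 0)]
          ring
        have hRi := hR i (by omega)
        rw [hid]
        push_cast
        linarith
  exact acc m (le_refl m)

variable {H : Type} [Group H]

/-- Words over a symmetric generating set. -/
lemma word_exists (S : Set H) (hSsym : ∀ s ∈ S, s⁻¹ ∈ S)
    (hSgen : Subgroup.closure S = ⊤) (u : H) :
    ∃ l : List H, (∀ s ∈ l, s ∈ S) ∧ l.prod = u := by
  have hu : u ∈ Subgroup.closure S := by rw [hSgen]; exact Subgroup.mem_top u
  have hu' : u ∈ (Subgroup.closure S).toSubmonoid := hu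
  rw [Subgroup.closure_toSubmonoid] at hu'
  have hsub : S ∪ S⁻¹ ⊆ S := by
    rintro x (hx | hx)
    · exact hx
    · have := hSsym x⁻¹ hx
      simpa using this
  exact Submonoid.exists_list_of_mem_closure (Submonoid.closure_mono hsub hu')

/-- Local perturbation estimate along a word. -/
lemma local_estimate {X : Type} [MetricSpace X] (φ : H →* (X ≃ᵢ X)) (φε : H → (X ≃ᵢ X))
    (dI : (X ≃ᵢ X) → (X ≃ᵢ X) → ℝ) (S : Set H) (ε σ : ℝ)
    (hrel : ∀ f : H, ∀ s ∈ S, dI (φε (f * s)) (φε f * φ s) ≤ ε) :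
    ∀ (l : List H), (∀ s ∈ l, s ∈ S) →
    ∀ (f : H) (x : X),
      (∀ v ∈ l.tails, ∀ a b : X ≃ᵢ X, dI a b ≤ ε →
        dist (a (φ v.prod x)) (b (φ v.prod x)) ≤ σ) →
      dist (φε (f * l.prod) x) (φε f (φ l.prod x)) ≤ l.length * σ := by
  intro l
  induction l with
  | nil =>
    intro _ f x _
    simp
  | cons s t IH =>
    intro hl f x hpts
    have hsS : s ∈ S := hl s List.mem_cons_self
    have htS : ∀ u ∈ t, u ∈ S := fun u hu => hl u (List.mem_cons_of_mem s hu)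
    have hpts' : ∀ v ∈ t.tails, ∀ a b : X ≃ᵢ X, dI a b ≤ ε →
        dist (a (φ v.prod x)) (b (φ v.prod x)) ≤ σ := by
      intro v hv
      exact hpts v (by
        rw [List.mem_tails] at hv ⊢
        exact hv.trans (List.suffix_cons s t))
    have IH' := IH htS (f * s) x hpts'
    have hstep : dist (φε ((f * s) * t.prod) x) (φε f (φ ((s :: t).prod) x)) ≤
        t.length * σ + σ := by
      have h1 : dist (φε (f * s) (φ t.prod x)) ((φε f * φ s) (φ t.prod x)) ≤ σ := by
        have hT : t ∈ (s :: t).tails := by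
          rw [List.mem_tails]; exact List.suffix_cons s t
        exact hpts t hT _ _ (hrel f s hsS)
      have h2 : (φε f * φ s) (φ t.prod x) = φε f (φ ((s :: t).prod) x) := by
        rw [List.prod_cons, map_mul]
        rfl
      calc dist (φε ((f * s) * t.prod) x) (φε f (φ ((s :: t).prod) x))
          ≤ dist (φε ((f * s) * t.prod) x) (φε (f * s) (φ t.prod x))
            + dist (φε (f * s) (φ t.prod x)) (φε f (φ ((s :: t).prod) x)) :=
            dist_triangle _ _ _
        _ ≤ t.length * σ + σ := by
            rw [← h2]
            exact add_le_add IH' h1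
    have heq : (f * s) * t.prod = f * (s :: t).prod := by
      rw [List.prod_cons, mul_assoc]
    rw [heq] at hstep
    calc dist (φε (f * (s :: t).prod) x) (φε f (φ ((s :: t).prod) x))
        ≤ t.length * σ + σ := hstep
      _ = (s :: t).length * σ := by simp [List.length_cons]; ring

end PertAux

open PertAux

/-- with `X` proper Gromov-hyperbolic and `φ : H → Isom(X)` injective
onto a quasi-convex cocompact subgroup, there is `ε₀ > 0` such that every
`ε`-perturbation `φ_ε` of `φ` with `0 ≤ ε ≤ ε₀` is injective. -/
theorem perturbation_injective
    {X H : Type} [MetricSpace X] [ProperSpace X] [Group H] [Infinite H]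
    (δ : ℝ) (hδ : 0 ≤ δ) (hX : DeltaHyperbolic X δ)
    (S : Set H) (hSfin : S.Finite) (hSsym : ∀ s ∈ S, s⁻¹ ∈ S)
    (hSgen : Subgroup.closure S = ⊤)
    (φ : H →* (X ≃ᵢ X)) (hφ : Function.Injective φ)
    (hpd : ∀ C : Set X, IsCompact C → {h : H | ∃ x ∈ C, φ h x ∈ C}.Finite)
    (A : Set X) (hA : A.Nonempty) (hAqc : QuasiConvexSet A)
    (hAinv : ∀ h : H, ∀ x ∈ A, φ h x ∈ A)
    (hAcc : ∃ C : Set X, IsCompact C ∧ A ⊆ ⋃ h : H, (φ h) '' C)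
    (dI : (X ≃ᵢ X) → (X ≃ᵢ X) → ℝ)
    (hIsymm : ∀ a b, dI a b = dI b a)
    (hItri : ∀ a b c', dI a c' ≤ dI a b + dI b c')
    (hIinv : ∀ k a b, dI (k * a) (k * b) = dI a b)
    (hIcont : ∀ x : X, ∀ σ : ℝ, 0 < σ → ∃ τ : ℝ, 0 < τ ∧
      ∀ a b : X ≃ᵢ X, dI a b ≤ τ → dist (a x) (b x) ≤ σ) :
    ∃ ε₀ : ℝ, 0 < ε₀ ∧ ∀ ε : ℝ, 0 ≤ ε → ε ≤ ε₀ →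
      ∀ φε : H → (X ≃ᵢ X),
        (∀ f : H, ∀ s ∈ S, dI (φε (f * s)) (φε f * φ s) ≤ ε) →
        Function.Injective φε := by
  classical
  -- basepoint and constants
  obtain ⟨p, hpA⟩ := hA
  obtain ⟨εA, hεA0, hεAqc⟩ := hAqc
  obtain ⟨C, hCcomp, hCcov⟩ := hAcc
  obtain ⟨D₀, hD₀⟩ := hCcomp.isBounded.subset_closedBall p
  obtain ⟨D, hD⟩ : ∃ D : ℝ, D = max D₀ 0 := ⟨_, rfl⟩
  have hD0 : (0:ℝ) ≤ D := by rw [hD]; exact le_max_right _ _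
  have hDC : C ⊆ Metric.closedBall p D := by
    rw [hD]
    exact hD₀.trans (Metric.closedBall_subset_closedBall (le_max_left _ _))
  obtain ⟨R₁, hR₁⟩ : ∃ R₁ : ℝ, R₁ = εA + D := ⟨_, rfl⟩
  have hR₁0 : 0 ≤ R₁ := by rw [hR₁]; exact add_nonneg hεA0 hD0
  obtain ⟨δ', hδ'⟩ : ∃ δ' : ℝ, δ' = 3 * δ := ⟨_, rfl⟩
  have hδ'0 : 0 ≤ δ' := by rw [hδ']; linarith
  obtain ⟨K, hK⟩ : ∃ K : ℝ, K = 3 * R₁ + 1 := ⟨_, rfl⟩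
  have hK0 : (0:ℝ) ≤ K := by rw [hK]; linarith
  obtain ⟨L, hL⟩ : ∃ L : ℝ, L = 2*K + 2*δ' + 2*R₁ + 3 := ⟨_, rfl⟩
  have hL0 : (0:ℝ) < L := by rw [hL]; linarith
  -- orbit-distance helper
  have horb : ∀ u v : H, dist (φ u p) (φ v p) = dist p (φ (u⁻¹ * v) p) := by
    intro u v
    have h1 : φ v = φ u * φ (u⁻¹ * v) := by
      rw [← map_mul, mul_inv_cancel_left]
    rw [h1, IsometryEquiv.mul_apply]
    exact (φ u).dist_eq p _
  -- finite set of bounded jumps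
  obtain ⟨F, hFdef⟩ : ∃ F : Set H, F = {k : H | dist p (φ k p) ≤ 2*L + 2*R₁ + 1} := ⟨_, rfl⟩
  have hFfin : F.Finite := by
    have hsub : F ⊆ {h : H | ∃ x ∈ Metric.closedBall p (2*L + 2*R₁ + 1),
        φ h x ∈ Metric.closedBall p (2*L + 2*R₁ + 1)} := by
      intro k hk
      rw [hFdef] at hk
      refine ⟨p, ?_, ?_⟩
      · simp only [Metric.mem_closedBall, dist_self]
        linarith
      · simp only [Metric.mem_closedBall]
        rw [dist_comm]
        exact hk
    exact (hpd _ (isCompact_closedBall _ _)).subset hsub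
  have hF1 : (1:H) ∈ F := by
    rw [hFdef]
    simp only [mem_setOf_eq, map_one]
    simp only [IsometryEquiv.coe_one, id_eq, dist_self]
    linarith
  obtain ⟨B, hBdef⟩ : ∃ B : Set H, B = {k : H | k ≠ 1 ∧ dist p (φ k p) ≤ 2*L} := ⟨_, rfl⟩
  have hBF : B ⊆ F := by
    intro k hk
    rw [hBdef] at hk
    rw [hFdef]
    have := hk.2
    simp only [mem_setOf_eq]
    linarith
  have hBfin : B.Finite := hFfin.subset hBF
  -- words
  have hword := fun u => word_exists S hSsym hSgen u
  choose word hwordS hwordprod using hword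
  -- max word length over F
  obtain ⟨M, hMdef⟩ : ∃ M : ℕ, M = hFfin.toFinset.sup (fun k => (word k).length) := ⟨_, rfl⟩
  have hM : ∀ k ∈ F, (word k).length ≤ M := by
    intro k hk
    rw [hMdef]
    exact Finset.le_sup (f := fun k => (word k).length) (hFfin.mem_toFinset.mpr hk)
  -- moved points
  have hmoved : ∀ k : H, k ≠ 1 → ∃ x : X, φ k x ≠ x := by
    intro k hk
    by_contra hcon
    push_neg at hcon
    apply hk
    apply hφ
    rw [map_one]
    exact IsometryEquiv.ext hcon
  obtain ⟨xp, hxp⟩ : ∃ xp : H → X, ∀ k : H, k ≠ 1 → φ k (xp k) ≠ xp k := by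
    refine ⟨fun k => if hk : ∃ x : X, φ k x ≠ x then hk.choose else p, ?_⟩
    intro k hk
    have h1 := hmoved k hk
    simp only [dif_pos h1]
    exact h1.choose_spec
  have hdd : ∀ k : H, k ≠ 1 → 0 < dist (xp k) (φ k (xp k)) := by
    intro k hk
    rw [dist_pos]
    exact fun h => hxp k hk h.symm
  -- choice of σ
  obtain ⟨σ, hσ0, hσM, hσB⟩ : ∃ σ : ℝ, 0 < σ ∧ (M:ℝ) * σ ≤ 1/4 ∧
      ∀ k ∈ B, ((word k).length : ℝ) * σ < dist (xp k) (φ k (xp k)) := by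
    have hbase0 : (0:ℝ) < 1/(4*(M:ℝ)+4) := by positivity
    have hbaseM : (M:ℝ) * (1/(4*(M:ℝ)+4)) ≤ 1/4 := by
      rw [mul_one_div, div_le_div_iff₀ (by positivity) (by norm_num)]
      linarith [Nat.cast_nonneg (α := ℝ) M]
    by_cases hBne : hBfin.toFinset.Nonempty
    · set σ₁ := hBfin.toFinset.inf' hBne
        (fun k => dist (xp k) (φ k (xp k)) / (((word k).length : ℝ) + 1)) with hσ₁
      have hσ₁pos : 0 < σ₁ := by
        rw [hσ₁, Finset.lt_inf'_iff]
        intro k hk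
        have hkB : k ∈ B := hBfin.mem_toFinset.mp hk
        rw [hBdef] at hkB
        exact div_pos (hdd k hkB.1) (by positivity)
      refine ⟨min σ₁ (1/(4*(M:ℝ)+4)), lt_min hσ₁pos hbase0, ?_, ?_⟩
      · calc (M:ℝ) * min σ₁ (1/(4*(M:ℝ)+4)) ≤ (M:ℝ) * (1/(4*(M:ℝ)+4)) :=
              mul_le_mul_of_nonneg_left (min_le_right _ _) (Nat.cast_nonneg _)
          _ ≤ 1/4 := hbaseM
      · intro k hkB
        have hk' : k ∈ hBfin.toFinset := hBfin.mem_toFinset.mpr hkB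
        have h1 : min σ₁ (1/(4*(M:ℝ)+4))
            ≤ dist (xp k) (φ k (xp k)) / (((word k).length : ℝ) + 1) :=
          (min_le_left _ _).trans (Finset.inf'_le _ hk')
        have h2 : min σ₁ (1/(4*(M:ℝ)+4)) * (((word k).length : ℝ) + 1)
            ≤ dist (xp k) (φ k (xp k)) := by
          rw [← le_div_iff₀ (by positivity)]
          exact h1
        have h3 : 0 < min σ₁ (1/(4*(M:ℝ)+4)) := lt_min hσ₁pos hbase0
        nlinarith [Nat.cast_nonneg (α := ℝ) (word k).length]
    · refine ⟨1/(4*(M:ℝ)+4), hbase0, hbaseM, ?_⟩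
      intro k hkB
      exact absurd ⟨k, hBfin.mem_toFinset.mpr hkB⟩ hBne
  -- the finite set of reference points
  obtain ⟨P, hPdef⟩ : ∃ P : Finset X, P =
      ((hFfin.toFinset ×ˢ hFfin.toFinset).biUnion
        (fun kk => (((word kk.1 ++ word kk.2).tails).map (fun v => φ v.prod p)).toFinset))
      ∪ (hBfin.toFinset.biUnion
        (fun k => (((word k).tails).map (fun v => φ v.prod (xp k))).toFinset)) := ⟨_, rfl⟩
  have hP1 : ∀ k1 k2 : H, k1 ∈ F → k2 ∈ F →
      ∀ v ∈ (word k1 ++ word k2).tails, φ v.prod p ∈ P := by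
    intro k1 k2 hk1 hk2 v hv
    rw [hPdef]
    simp only [Finset.mem_union, Finset.mem_biUnion]
    left
    exact ⟨(k1, k2), Finset.mem_product.mpr ⟨hFfin.mem_toFinset.mpr hk1,
      hFfin.mem_toFinset.mpr hk2⟩, List.mem_toFinset.mpr (List.mem_map.mpr ⟨v, hv, rfl⟩)⟩
  have hP2 : ∀ k ∈ B, ∀ v ∈ (word k).tails, φ v.prod (xp k) ∈ P := by
    intro k hk v hv
    rw [hPdef]
    simp only [Finset.mem_union, Finset.mem_biUnion]
    right
    exact ⟨k, hBfin.mem_toFinset.mpr hk, List.mem_toFinset.mpr (List.mem_map.mpr ⟨v, hv, rfl⟩)⟩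
  have hPne : P.Nonempty := by
    refine ⟨φ ((word 1 ++ word 1).prod) p, hP1 1 1 hF1 hF1 _ ?_⟩
    rw [List.mem_tails]
  -- τ function and ε₀
  choose τ hτ0 hτ using (fun x : X => hIcont x σ hσ0)
  refine ⟨P.inf' hPne τ, ?_, ?_⟩
  · rw [Finset.lt_inf'_iff]
    exact fun x _ => hτ0 x
  intro ε hε0 hεε₀ φε hrel
  intro g h' hgh'
  by_contra hne
  obtain ⟨k, hkdef⟩ : ∃ k : H, k = g⁻¹ * h' := ⟨_, rfl⟩
  have hk1 : k ≠ 1 := by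
    rw [hkdef]
    intro hcon
    exact hne (inv_mul_eq_one.mp hcon)
  have hPprop : ∀ x ∈ P, ∀ a b : X ≃ᵢ X, dI a b ≤ ε → dist (a x) (b x) ≤ σ := by
    intro x hx a b hab
    exact hτ x a b (hab.trans (hεε₀.trans (Finset.inf'_le τ hx)))
  by_cases hcase : dist p (φ k p) ≤ 2*L
  · -- CASE 1: short relation
    have hkB : k ∈ B := by rw [hBdef]; exact ⟨hk1, hcase⟩
    have est := local_estimate φ φε dI S ε σ hrel (word k) (hwordS k) g (xp k)
      (fun v hv a b hab => hPprop _ (hP2 k hkB v hv) a b hab)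
    rw [hwordprod k] at est
    have hgk : g * k = h' := by rw [hkdef]; group
    rw [hgk, hgh'] at est
    have heq : dist (φε h' (xp k)) (φε h' (φ k (xp k))) = dist (xp k) (φ k (xp k)) :=
      (φε h').dist_eq _ _
    rw [heq] at est
    exact absurd est (not_le.mpr (hσB k hkB))
  · -- CASE 2: long chain
    push_neg at hcase
    have hgA : φ g p ∈ A := hAinv g p hpA
    have hh'A : φ h' p ∈ A := hAinv h' p hpA
    obtain ⟨s, hs⟩ := hX.1 (φ g p) (φ h' p)
    obtain ⟨T, hTdef⟩ : ∃ T : ℝ, T = dist (φ g p) (φ h' p) := ⟨_, rfl⟩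
    have hTk : T = dist p (φ k p) := by rw [hTdef, hkdef]; exact horb g h'
    have hT2L : 2*L < T := by rw [hTk]; exact hcase
    have hT0 : 0 < T := lt_of_le_of_lt (by linarith) hT2L
    obtain ⟨γ, hγ0, hγT', hγiso', hγim'⟩ := id hs
    rw [← hTdef] at hγT' hγiso' hγim'
    obtain ⟨m, hmdef⟩ : ∃ m : ℕ, m = ⌊T / L⌋₊ := ⟨_, rfl⟩
    have hm2 : 2 ≤ m := by
      rw [hmdef]
      exact Nat.le_floor (by rw [le_div_iff₀ hL0]; push_cast; linarith)
    have hmlo : (m:ℝ) ≤ T / L := by rw [hmdef]; exact Nat.floor_le (by positivity)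
    have hmhi : T / L < (m:ℝ) + 1 := by rw [hmdef]; exact Nat.lt_floor_add_one _
    have hm0 : (0:ℝ) < (m:ℝ) := by
      have : (2:ℝ) ≤ (m:ℝ) := by exact_mod_cast hm2
      linarith
    obtain ⟨l', hℓdef⟩ : ∃ l' : ℝ, l' = T / m := ⟨_, rfl⟩
    have hℓL : L ≤ l' := by
      rw [hℓdef, le_div_iff₀ hm0]
      rw [le_div_iff₀ hL0] at hmlo
      linarith
    have hℓ2L : l' ≤ 2*L := by
      rw [hℓdef, div_le_iff₀ hm0]
      rw [div_lt_iff₀ hL0] at hmhi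
      have h3 : (2:ℝ) ≤ (m:ℝ) := by exact_mod_cast hm2
      have h4 : ((m:ℝ)+1)*L ≤ (2*(m:ℝ))*L :=
        mul_le_mul_of_nonneg_right (by linarith) hL0.le
      linarith
    have hℓ0 : 0 < l' := lt_of_lt_of_le hL0 hℓL
    have htm : (m:ℝ) * l' = T := by
      rw [hℓdef]
      field_simp
    have htmem : ∀ i : ℕ, i ≤ m → (i:ℝ) * l' ∈ Icc (0:ℝ) T := by
      intro i hi
      constructor
      · exact mul_nonneg (Nat.cast_nonneg _) hℓ0.le
      · rw [← htm]
        exact mul_le_mul_of_nonneg_right (by exact_mod_cast hi) hℓ0.le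
    have hγd : ∀ i j : ℕ, i ≤ j → j ≤ m →
        dist (γ ((i:ℝ)*l')) (γ ((j:ℝ)*l')) = ((j:ℝ)-(i:ℝ))*l' := by
      intro i j hij hjm
      rw [hγiso' _ (htmem i (hij.trans hjm)) _ (htmem j hjm)]
      rw [abs_of_nonpos]
      · ring
      · have h9 : (i:ℝ) ≤ (j:ℝ) := by exact_mod_cast hij
        have h10 : (i:ℝ)*l' ≤ (j:ℝ)*l' := mul_le_mul_of_nonneg_right h9 hℓ0.le
        linarith
    -- choose chain elements
    have hchoice : ∀ i : ℕ, ∃ u : H, (i ≤ m → dist (γ ((i:ℝ)*l')) (φ u p) ≤ R₁)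
        ∧ (i = 0 → u = g) ∧ (i = m → u = h') := by
      intro i
      rcases eq_or_ne i 0 with rfl | hi0
      · refine ⟨g, fun _ => ?_, fun _ => rfl, fun h0 => absurd h0.symm (by omega)⟩
        have hc : ((0:ℕ):ℝ) * l' = 0 := by norm_num
        rw [hc, hγ0, dist_self]
        exact hR₁0
      rcases eq_or_ne i m with rfl | him
      · refine ⟨h', fun _ => ?_, fun h0 => absurd h0 hi0, fun _ => rfl⟩
        rw [htm, hγT', dist_self]
        exact hR₁0
      by_cases hile : i ≤ m
      · have hmem : γ ((i:ℝ)*l') ∈ s := by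
          rw [hγim']
          exact ⟨(i:ℝ)*l', htmem i hile, rfl⟩
        obtain ⟨q, hqA, hqd⟩ := hεAqc (φ g p) hgA (φ h' p) hh'A s hs _ hmem
        obtain ⟨u, huq⟩ := mem_iUnion.mp (hCcov hqA)
        obtain ⟨c, hcC, hcq⟩ := huq
        refine ⟨u, fun _ => ?_, fun h0 => absurd h0 hi0, fun hm' => absurd hm' him⟩
        have h1 : dist q (φ u p) ≤ D := by
          rw [← hcq, (φ u).dist_eq c p]
          have := hDC hcC
          rwa [Metric.mem_closedBall] at this
        calc dist (γ ((i:ℝ)*l')) (φ u p) ≤ dist (γ ((i:ℝ)*l')) q + dist q (φ u p) :=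
              dist_triangle _ _ _
          _ ≤ εA + D := add_le_add hqd h1
          _ = R₁ := hR₁.symm
      · exact ⟨g, fun h => absurd h hile, fun h0 => absurd h0 hi0,
          fun hm' => absurd hm' him⟩
    choose ho hoR hoG hoH using hchoice
    obtain ⟨ki, hkidef⟩ : ∃ f : ℕ → H, f = fun i => (ho i)⁻¹ * ho (i+1) := ⟨_, rfl⟩
    have hki : ∀ i, ho i * ki i = ho (i+1) := by
      intro i; simp only [hkidef]; group
    have hkival : ∀ i : ℕ, dist p (φ (ki i) p) = dist (φ (ho i) p) (φ (ho (i+1)) p) := by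
      intro i
      simp only [hkidef]
      exact (horb (ho i) (ho (i+1))).symm
    -- orbit distance bounds along the chain
    have horbd : ∀ i j : ℕ, i ≤ j → j ≤ m →
        ((j:ℝ)-(i:ℝ))*l' - 2*R₁ ≤ dist (φ (ho i) p) (φ (ho j) p) ∧
        dist (φ (ho i) p) (φ (ho j) p) ≤ ((j:ℝ)-(i:ℝ))*l' + 2*R₁ := by
      intro i j hij hjm
      have h1 := hoR i (hij.trans hjm)
      have h2 := hoR j hjm
      have h3 := hγd i j hij hjm
      constructor
      · have h7 := dist_triangle (γ ((i:ℝ)*l')) (φ (ho i) p) (γ ((j:ℝ)*l'))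
        have h8 := dist_triangle (φ (ho i) p) (φ (ho j) p) (γ ((j:ℝ)*l'))
        have h5 : dist (φ (ho j) p) (γ ((j:ℝ)*l')) = dist (γ ((j:ℝ)*l')) (φ (ho j) p) :=
          dist_comm _ _
        rw [h3] at h7
        linarith
      · have h4 := dist_triangle (φ (ho i) p) (γ ((i:ℝ)*l')) (φ (ho j) p)
        have h5 := dist_triangle (γ ((i:ℝ)*l')) (γ ((j:ℝ)*l')) (φ (ho j) p)
        have h6 : dist (φ (ho i) p) (γ ((i:ℝ)*l')) = dist (γ ((i:ℝ)*l')) (φ (ho i) p) :=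
          dist_comm _ _
        rw [h3] at h5
        linarith
    have honecast : ∀ i : ℕ, ((i+1:ℕ):ℝ) - (i:ℝ) = 1 := by intro i; push_cast; ring
    have htwocast : ∀ i : ℕ, ((i+2:ℕ):ℝ) - (i:ℝ) = 2 := by intro i; push_cast; ring
    have hkiF : ∀ i, i + 1 ≤ m → ki i ∈ F := by
      intro i hi
      have h2 := (horbd i (i+1) (Nat.le_succ i) hi).2
      rw [honecast i, one_mul] at h2
      rw [hFdef]
      simp only [mem_setOf_eq]
      rw [hkival i]
      linarith
    -- perturbation estimates
    have hjump : ∀ i, i + 1 ≤ m →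
        dist (φε (ho (i+1)) p) (φε (ho i) (φ (ki i) p)) ≤ (M:ℝ) * σ := by
      intro i hi
      have hkiF' := hkiF i hi
      have hpts : ∀ v ∈ (word (ki i)).tails, ∀ a b : X ≃ᵢ X, dI a b ≤ ε →
          dist (a (φ v.prod p)) (b (φ v.prod p)) ≤ σ := by
        intro v hv a b hab
        refine hPprop _ (hP1 1 (ki i) hF1 hkiF' v ?_) a b hab
        rw [List.mem_tails] at hv ⊢
        exact hv.trans (List.suffix_append _ _)
      have est := local_estimate φ φε dI S ε σ hrel (word (ki i)) (hwordS _) (ho i) p hpts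
      rw [hwordprod, hki i] at est
      calc dist (φε (ho (i+1)) p) (φε (ho i) (φ (ki i) p))
          ≤ ((word (ki i)).length : ℝ) * σ := est
        _ ≤ (M:ℝ) * σ := mul_le_mul_of_nonneg_right
            (by exact_mod_cast hM _ hkiF') hσ0.le
    have hbase : ∀ i : ℕ, ∀ u : H,
        dist (φε (ho i) p) (φε (ho i) (φ u p)) = dist p (φ u p) :=
      fun i u => (φε (ho i)).dist_eq _ _
    -- single-jump distance bounds for the perturbed chain
    have hup1 : ∀ i, i + 1 ≤ m →
        dist (φε (ho i) p) (φε (ho (i+1)) p) ≤ l' + 2*R₁ + (M:ℝ)*σ := by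
      intro i hi
      have h1 := hjump i hi
      have h2 := hbase i (ki i)
      have h3 := dist_triangle (φε (ho i) p) (φε (ho i) (φ (ki i) p)) (φε (ho (i+1)) p)
      have h4 : dist p (φ (ki i) p) ≤ l' + 2*R₁ := by
        have := (horbd i (i+1) (Nat.le_succ i) hi).2
        rw [honecast i, one_mul] at this
        rw [hkival i]
        exact this
      have h5 : dist (φε (ho i) (φ (ki i) p)) (φε (ho (i+1)) p)
          = dist (φε (ho (i+1)) p) (φε (ho i) (φ (ki i) p)) := dist_comm _ _
      linarith
    have hlo1 : ∀ i, i + 1 ≤ m →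
        l' - 2*R₁ - (M:ℝ)*σ ≤ dist (φε (ho i) p) (φε (ho (i+1)) p) := by
      intro i hi
      have h1 := hjump i hi
      have h2 := hbase i (ki i)
      have h3 := dist_triangle (φε (ho i) p) (φε (ho (i+1)) p) (φε (ho i) (φ (ki i) p))
      have h4 : l' - 2*R₁ ≤ dist p (φ (ki i) p) := by
        have := (horbd i (i+1) (Nat.le_succ i) hi).1
        rw [honecast i, one_mul] at this
        rw [hkival i]
        exact this
      linarith
    -- double-jump lower bound
    have hlo2 : ∀ i, i + 2 ≤ m →
        2*l' - 2*R₁ - 2*((M:ℝ)*σ) ≤ dist (φε (ho i) p) (φε (ho (i+2)) p) := by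
      intro i hi
      have hkiF1 : ki i ∈ F := hkiF i (by omega)
      have hkiF2 : ki (i+1) ∈ F := hkiF (i+1) (by omega)
      have hpts : ∀ v ∈ (word (ki i) ++ word (ki (i+1))).tails,
          ∀ a b : X ≃ᵢ X, dI a b ≤ ε →
          dist (a (φ v.prod p)) (b (φ v.prod p)) ≤ σ := by
        intro v hv a b hab
        exact hPprop _ (hP1 (ki i) (ki (i+1)) hkiF1 hkiF2 v hv) a b hab
      have hlmem : ∀ u ∈ word (ki i) ++ word (ki (i+1)), u ∈ S := by
        intro u hu
        rcases List.mem_append.mp hu with hu | hu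
        · exact hwordS _ u hu
        · exact hwordS _ u hu
      have est := local_estimate φ φε dI S ε σ hrel
        (word (ki i) ++ word (ki (i+1))) hlmem (ho i) p hpts
      rw [List.prod_append, hwordprod, hwordprod] at est
      have hprodho : ho i * (ki i * ki (i+1)) = ho (i+2) := by
        rw [← mul_assoc, hki i, hki (i+1)]
      rw [hprodho] at est
      have hlen : ((word (ki i) ++ word (ki (i+1))).length : ℝ) * σ ≤ 2*((M:ℝ)*σ) := by
        rw [List.length_append]
        push_cast
        have l1 : ((word (ki i)).length : ℝ) ≤ (M:ℝ) := by exact_mod_cast hM _ hkiF1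
        have l2 : ((word (ki (i+1))).length : ℝ) ≤ (M:ℝ) := by exact_mod_cast hM _ hkiF2
        have l3 : ((word (ki i)).length : ℝ) + ((word (ki (i+1))).length : ℝ)
            ≤ 2*(M:ℝ) := by linarith
        have l4 := mul_le_mul_of_nonneg_right l3 hσ0.le
        linarith
      have est' : dist (φε (ho (i+2)) p) (φε (ho i) (φ (ki i * ki (i+1)) p))
          ≤ 2*((M:ℝ)*σ) := le_trans est hlen
      have h2 := hbase i (ki i * ki (i+1))
      have hval : dist p (φ (ki i * ki (i+1)) p)
          = dist (φ (ho i) p) (φ (ho (i+2)) p) := by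
        have hcomp : ki i * ki (i+1) = (ho i)⁻¹ * ho (i+2) := by
          simp only [hkidef]; group
        rw [hcomp]
        exact (horb (ho i) (ho (i+2))).symm
      have h4 : 2*l' - 2*R₁ ≤ dist p (φ (ki i * ki (i+1)) p) := by
        have := (horbd i (i+2) (by omega) hi).1
        rw [htwocast i] at this
        rw [hval]
        linarith
      have h3 := dist_triangle (φε (ho i) p) (φε (ho i) (φ (ki i * ki (i+1)) p))
        (φε (ho (i+2)) p)
      have h3' := dist_triangle (φε (ho i) p) (φε (ho (i+2)) p)
        (φε (ho i) (φ (ki i * ki (i+1)) p))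
      have h5 : dist (φε (ho (i+2)) p) (φε (ho i) (φ (ki i * ki (i+1)) p))
          = dist (φε (ho i) (φ (ki i * ki (i+1)) p)) (φε (ho (i+2)) p) := dist_comm _ _
      linarith
    -- chain hypotheses
    have hfp : ∀ w x y z : X, min (gp w x y) (gp w y z) - δ' ≤ gp w x z := by
      intro w x y z
      rw [hδ']
      exact four_point hδ hX w x y z
    have hR : ∀ i, i + 1 ≤ m → L - 2*R₁ - 1 ≤ dist (φε (ho i) p) (φε (ho (i+1)) p) := by
      intro i hi
      have h1 := hlo1 i hi
      linarith [hℓL, hσM]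
    have hKj : ∀ i, i + 2 ≤ m →
        gp (φε (ho (i+1)) p) (φε (ho i) p) (φε (ho (i+2)) p) ≤ K := by
      intro i hi
      have h1 := hup1 i (by omega)
      have h2 := hup1 (i+1) (by omega)
      have h3 := hlo2 i hi
      simp only [gp]
      have hc1 : dist (φε (ho (i+1)) p) (φε (ho i) p)
          = dist (φε (ho i) p) (φε (ho (i+1)) p) := dist_comm _ _
      rw [hc1, hK]
      linarith [hσM]
    have hchain := chain_lemma δ' K (L - 2*R₁ - 1) hδ'0 hK0 hfp
      (fun i => φε (ho i) p) m (by omega) hR hKj (by rw [hL]; linarith)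
    have hends : dist (φε (ho 0) p) (φε (ho m) p) = 0 := by
      rw [hoG 0 rfl, hoH m rfl, hgh', dist_self]
    rw [hends] at hchain
    have : (0:ℝ) < 2*(m:ℝ) := by linarith
    linarith
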